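/- arXiv:1908.10020 — 4 statements merged into one kernel-verified Lean document; each statement's English description precedes it below -/
import Mathlib

section
/- For every natural number n, the number of pairs (x, y) of natural numbers with x < 2^n, y < 2^n, and x XOR y = x + y is exactly 3^n. -/
theorem card_xor_eq_add (n : ℕ) :
    ((Finset.range (2 ^ n) ×ˢ Finset.range (2 ^ n)).filter
      (fun p => p.1 ^^^ p.2 = p.1 + p.2)).card = 3 ^ n := by
  induction n with
  | zero => decide
  | succ n ih =>
    set S : ℕ → Finset (ℕ × ℕ) := fun m =>
      (Finset.range (2 ^ m) ×ˢ Finset.range (2 ^ m)).filter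
        (fun p => p.1 ^^^ p.2 = p.1 + p.2) with hS
    show (S (n+1)).card = 3 ^ (n+1)
    have hT : (S (n+1)).card = 3 * (S n).card := by
      let T : Finset (Bool × Bool) := {(false, false), (false, true), (true, false)}
      have hcard : (T ×ˢ S n).card = 3 * (S n).card := by
        rw [Finset.card_product]; rfl
      rw [← hcard]
      apply Finset.card_bij' (fun p _ => ((Nat.bodd p.1, Nat.bodd p.2), (Nat.div2 p.1, Nat.div2 p.2)))
        (fun t _ => (Nat.bit t.1.1 t.2.1, Nat.bit t.1.2 t.2.2))
      · -- backward maps into T ×ˢ S n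
        rintro ⟨x, y⟩ hp
        simp only [hS, Finset.mem_filter, Finset.mem_product, Finset.mem_range] at hp
        obtain ⟨⟨hx, hy⟩, hxy⟩ := hp
        have hx' : Nat.bit (Nat.bodd x) (Nat.div2 x) = x := Nat.bit_bodd_div2 x
        have hy' : Nat.bit (Nat.bodd y) (Nat.div2 y) = y := Nat.bit_bodd_div2 y
        have hkey : (Nat.bit (Nat.bodd x) (Nat.div2 x)) ^^^ (Nat.bit (Nat.bodd y) (Nat.div2 y))
            = x + y := by rw [hx', hy']; exact hxy
        rw [Nat.xor_bit] at hkey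
        rw [← hx', ← hy'] at hkey
        rw [Nat.bit_val, Nat.bit_val, Nat.bit_val] at hkey
        have hm := Nat.xor_mod_two_eq (m := Nat.div2 x) (n := Nat.div2 y)
        have hx2 : Nat.div2 x = x / 2 := Nat.div2_val x
        have hy2 : Nat.div2 y = y / 2 := Nat.div2_val y
        have hpow : 2 ^ (n+1) = 2 * 2 ^ n := by ring
        simp only [Finset.mem_product, T, Finset.mem_insert, Finset.mem_singleton,
          Prod.mk.injEq, hS, Finset.mem_filter, Finset.mem_range]
        cases hbx : Nat.bodd x <;> cases hby : Nat.bodd y <;>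
          rw [hbx, hby] at hkey <;> simp at hkey <;>
          [skip; skip; skip;
           (exfalso; generalize hz : Nat.div2 x ^^^ Nat.div2 y = z at hkey hm; omega)] <;>
          refine ⟨by simp, ⟨?_, ?_⟩, ?_⟩ <;> omega
      · -- forward maps into S (n+1)
        rintro ⟨⟨u, v⟩, ⟨a, b⟩⟩ ht
        simp only [Finset.mem_product, T, Finset.mem_insert, Finset.mem_singleton,
          Prod.mk.injEq, hS, Finset.mem_filter, Finset.mem_range] at ht ⊢
        obtain ⟨huv, ⟨ha, hb⟩, hab⟩ := ht
        have h1 : Nat.bit u a ^^^ Nat.bit v b = Nat.bit (u != v) (a ^^^ b) := Nat.xor_bit ..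
        rw [hab] at h1
        refine ⟨⟨?_, ?_⟩, ?_⟩
        · rw [Nat.bit_val]; cases u <;> simp <;> [omega; omega]
        · rw [Nat.bit_val]; cases v <;> simp <;> [omega; omega]
        · rw [h1, Nat.bit_val, Nat.bit_val, Nat.bit_val]
          rcases huv with ⟨hu, hv⟩ | ⟨hu, hv⟩ | ⟨hu, hv⟩ <;> subst hu <;> subst hv <;>
            simp <;> omega
      · rintro ⟨x, y⟩ _
        simp [Nat.bit_bodd_div2]
      · rintro ⟨⟨u, v⟩, ⟨a, b⟩⟩ _
        simp [Nat.bodd_bit, Nat.div2_bit]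
    rw [hT, ih]; ring
end

section
/- For every natural number n, the number of pairs (x, y) of natural numbers with x < 2^n, y < 2^n, and (x XOR y : ℤ) = (x : ℤ) − (y : ℤ) is exactly 3^n. -/
private lemma xor_decomp (x y : ℕ) :
    x ^^^ y = 2 * (x / 2 ^^^ y / 2) + (x + y) % 2 := by
  have h1 : (x ^^^ y) / 2 = x / 2 ^^^ y / 2 := Nat.xor_div_two
  have h2 : (x ^^^ y) % 2 = (x + y) % 2 := Nat.xor_mod_two_eq
  omega

private lemma xor_le_add (x y : ℕ) : x ^^^ y ≤ x + y := by
  induction x using Nat.strong_induction_on generalizing y with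
  | _ x ih =>
    rcases Nat.eq_zero_or_pos x with h | h
    · subst h; simp
    have hd : x / 2 < x := Nat.div_lt_self h (by norm_num)
    have := ih (x / 2) hd (y / 2)
    have := xor_decomp x y
    omega

private lemma le_xor_add (x y : ℕ) : x ≤ (x ^^^ y) + y := by
  have h : (x ^^^ y) ^^^ y = x := by simp [Nat.xor_assoc]
  calc x = (x ^^^ y) ^^^ y := h.symm
    _ ≤ (x ^^^ y) + y := xor_le_add _ _

theorem card_xor_eq_sub (n : ℕ) :
    ((Finset.range (2 ^ n) ×ˢ Finset.range (2 ^ n)).filter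
      (fun p => ((p.1 ^^^ p.2 : ℕ) : ℤ) = (p.1 : ℤ) - (p.2 : ℤ))).card = 3 ^ n := by
  induction n with
  | zero => decide
  | succ n ih =>
    have hpow : (2:ℕ) ^ (n+1) = 2 * 2 ^ n := by ring
    have key :
        ((Finset.range (2 ^ (n+1)) ×ˢ Finset.range (2 ^ (n+1))).filter
          (fun p => ((p.1 ^^^ p.2 : ℕ) : ℤ) = (p.1 : ℤ) - (p.2 : ℤ))).card =
        (((Finset.range (2 ^ n) ×ˢ Finset.range (2 ^ n)).filter
          (fun p => ((p.1 ^^^ p.2 : ℕ) : ℤ) = (p.1 : ℤ) - (p.2 : ℤ)))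
          ×ˢ ({(0,0),(1,0),(1,1)} : Finset (ℕ × ℕ))).card := by
      apply Finset.card_bij' (fun p _ => ((p.1 / 2, p.2 / 2), (p.1 % 2, p.2 % 2)))
        (fun q _ => (2 * q.1.1 + q.2.1, 2 * q.1.2 + q.2.2))
      · -- left_inv
        rintro ⟨x, y⟩ _
        simp only [Prod.mk.injEq]
        refine ⟨?_, ?_⟩ <;> omega
      · -- right_inv
        rintro ⟨⟨a, b⟩, ⟨c, d⟩⟩ hq
        simp only [Finset.mem_product, Finset.mem_insert, Finset.mem_singleton,
          Prod.mk.injEq] at hq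
        obtain ⟨_, hcd⟩ := hq
        simp only [Prod.mk.injEq]
        refine ⟨⟨?_, ?_⟩, ?_, ?_⟩ <;> omega

      · -- hi
        rintro ⟨x, y⟩ hp
        simp only [Finset.mem_filter, Finset.mem_product, Finset.mem_range,
          Finset.mem_insert, Finset.mem_singleton, Prod.mk.injEq] at hp ⊢
        obtain ⟨⟨hx, hy⟩, hcond⟩ := hp
        have hdec := xor_decomp x y
        have hle := le_xor_add (x / 2) (y / 2)
        generalize hZ : x / 2 ^^^ y / 2 = Z at *
        generalize hX : x ^^^ y = X at *
        omega
      · -- hj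
        rintro ⟨⟨a, b⟩, ⟨c, d⟩⟩ hq
        simp only [Finset.mem_filter, Finset.mem_product, Finset.mem_range,
          Finset.mem_insert, Finset.mem_singleton, Prod.mk.injEq] at hq ⊢
        obtain ⟨⟨⟨ha, hb⟩, hcond⟩, hcd⟩ := hq
        have hdec := xor_decomp (2 * a + c) (2 * b + d)
        have hc1 : (2 * a + c) / 2 = a := by omega
        have hc2 : (2 * b + d) / 2 = b := by omega
        rw [hc1, hc2] at hdec
        generalize hX : (2 * a + c) ^^^ (2 * b + d) = X at *
        generalize hZ : a ^^^ b = Z at *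
        omega
    rw [key, Finset.card_product, ih]
    have h3 : ({(0,0),(1,0),(1,1)} : Finset (ℕ × ℕ)).card = 3 := by decide
    rw [h3]; ring
end

section
/- For all natural numbers x and y, (x XOR y : ℤ) = (y : ℤ) − (x : ℤ) if and only if x AND y = x (i.e., every binary digit position in which x has bit 1, y also has bit 1). -/
lemma xor_add_two_mul_and (x y : ℕ) : (x ^^^ y) + 2 * (x &&& y) = x + y := by
  induction x using Nat.binaryRec generalizing y with
  | zero => simp
  | bit b m ih =>
    induction y using Nat.binaryRec with
    | zero => simp
    | bit c n _ =>
      have h := ih n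
      rw [Nat.xor_bit, Nat.land_bit]
      cases b <;> cases c <;>
        simp only [Nat.bit_val, Bool.and_false, Bool.and_true, Bool.false_and, Bool.true_and,
          bne_self_eq_false, Bool.bne_false, Bool.bne_true, Bool.false_bne, Bool.true_bne,
          Bool.not_true, Bool.not_false, cond_true, cond_false, Bool.toNat_true,
          Bool.toNat_false] <;> omega

theorem xor_eq_sub_swap_iff_and_eq_left (x y : ℕ) :
    ((x ^^^ y : ℕ) : ℤ) = (y : ℤ) - (x : ℤ) ↔ x &&& y = x := by
  have h := xor_add_two_mul_and x y
  have hle : x &&& y ≤ x := Nat.and_le_left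
  constructor
  · intro he
    omega
  · intro he
    rw [he] at h
    omega
end

section
/- For every natural number n, the number of pairs (x, y) of natural numbers with x < 2^n, y < 2^n, and (x XOR y : ℤ) = (y : ℤ) − (x : ℤ) is exactly 3^n. -/
private lemma xor_two_mul_add (m n a b : ℕ) (ha : a < 2) (hb : b < 2) :
    (2 * m + a) ^^^ (2 * n + b) = 2 * (m ^^^ n) + (a ^^^ b) := by
  interval_cases a <;> interval_cases b
  · simpa [Nat.bit_val] using Nat.xor_bit false m false n
  · simpa [Nat.bit_val] using Nat.xor_bit false m true n
  · simpa [Nat.bit_val] using Nat.xor_bit true m false n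
  · simpa [Nat.bit_val] using Nat.xor_bit true m true n

private lemma xor_le_add_s8 : ∀ a b : ℕ, a ^^^ b ≤ a + b := by
  intro a
  induction a using Nat.strong_induction_on with
  | _ a ih =>
    intro b
    rcases Nat.eq_zero_or_pos a with h | h
    · simp [h]
    have ha2 : a % 2 < 2 := Nat.mod_lt _ (by norm_num)
    have hb2 : b % 2 < 2 := Nat.mod_lt _ (by norm_num)
    have ha := Nat.div_add_mod a 2
    have hb := Nat.div_add_mod b 2
    have hx := xor_two_mul_add (a / 2) (b / 2) (a % 2) (b % 2) ha2 hb2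
    have ihd := ih (a / 2) (Nat.div_lt_self h (by norm_num)) (b / 2)
    have hsm : (a % 2 ^^^ b % 2) ≤ a % 2 + b % 2 := by
      rcases Nat.mod_two_eq_zero_or_one a with h1 | h1 <;>
        rcases Nat.mod_two_eq_zero_or_one b with h2 | h2 <;> simp [h1, h2]
    calc a ^^^ b = (2 * (a/2) + a % 2) ^^^ (2 * (b/2) + b % 2) := by rw [ha, hb]
    _ = 2 * (a/2 ^^^ b/2) + (a % 2 ^^^ b % 2) := hx
    _ ≤ a + b := by omega

private lemma sub_le_xor (x y : ℕ) : (y : ℤ) - (x : ℤ) ≤ ((x ^^^ y : ℕ) : ℤ) := by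
  have h : y ≤ x + (x ^^^ y) := by
    calc y = x ^^^ (x ^^^ y) := (Nat.xor_xor_cancel_left x y).symm
    _ ≤ x + (x ^^^ y) := xor_le_add_s8 _ _
  have := Int.ofNat_le.mpr h
  push_cast at this ⊢
  omega

private lemma cond_split (x y : ℕ) :
    (((x ^^^ y : ℕ) : ℤ) = (y : ℤ) - (x : ℤ)) ↔
    ((((x / 2) ^^^ (y / 2) : ℕ) : ℤ) = ((y / 2 : ℕ) : ℤ) - ((x / 2 : ℕ) : ℤ) ∧
      ¬(x % 2 = 1 ∧ y % 2 = 0)) := by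
  have hx : x ^^^ y = 2 * ((x / 2) ^^^ (y / 2)) + ((x % 2) ^^^ (y % 2)) := by
    conv_lhs => rw [← Nat.div_add_mod x 2, ← Nat.div_add_mod y 2]
    exact xor_two_mul_add _ _ _ _ (Nat.mod_lt _ (by norm_num)) (Nat.mod_lt _ (by norm_num))
  have hle := sub_le_xor (x / 2) (y / 2)
  rcases Nat.mod_two_eq_zero_or_one x with h1 | h1 <;>
    rcases Nat.mod_two_eq_zero_or_one y with h2 | h2 <;>
    · rw [hx, h1, h2]
      norm_num
      push_cast
      omega

theorem card_xor_eq_sub_swap (n : ℕ) :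
    ((Finset.range (2 ^ n) ×ˢ Finset.range (2 ^ n)).filter
      (fun p => ((p.1 ^^^ p.2 : ℕ) : ℤ) = (p.2 : ℤ) - (p.1 : ℤ))).card = 3 ^ n := by
  induction n with
  | zero => decide
  | succ n ih =>
    have key :
        ((Finset.range (2 ^ (n+1)) ×ˢ Finset.range (2 ^ (n+1))).filter
          (fun p => ((p.1 ^^^ p.2 : ℕ) : ℤ) = (p.2 : ℤ) - (p.1 : ℤ))).card =
        ((Finset.range 3) ×ˢ ((Finset.range (2 ^ n) ×ˢ Finset.range (2 ^ n)).filter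
          (fun p => ((p.1 ^^^ p.2 : ℕ) : ℤ) = (p.2 : ℤ) - (p.1 : ℤ)))).card := by
      apply Finset.card_bij
        (fun p _ => (p.1 % 2 + p.2 % 2, (p.1 / 2, p.2 / 2)))
      · rintro ⟨x, y⟩ hp
        simp only [Finset.mem_filter, Finset.mem_product, Finset.mem_range] at hp ⊢
        obtain ⟨⟨hx, hy⟩, hc⟩ := hp
        rw [cond_split] at hc
        have hx2 : x % 2 < 2 := Nat.mod_lt _ (by norm_num)
        have hy2 : y % 2 < 2 := Nat.mod_lt _ (by norm_num)
        have h2 : (2:ℕ) ^ (n+1) = 2 * 2 ^ n := by rw [pow_succ]; ring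
        exact ⟨by omega, ⟨⟨by omega, by omega⟩, hc.1⟩⟩
      · rintro ⟨x, y⟩ hp ⟨x', y'⟩ hp' heq
        simp only [Finset.mem_filter, Finset.mem_product, Finset.mem_range] at hp hp'
        have hc := hp.2; have hc' := hp'.2
        rw [cond_split] at hc hc'
        simp only [Prod.mk.injEq] at heq ⊢
        obtain ⟨h1, h2, h3⟩ := heq
        have hb := hc.2; have hb' := hc'.2
        constructor <;> omega
      · rintro ⟨t, x, y⟩ ht
        simp only [Finset.mem_filter, Finset.mem_product, Finset.mem_range] at ht
        obtain ⟨ht3, ⟨hx, hy⟩, hc⟩ := ht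
        have e1 : (2 * x + (if t = 2 then 1 else 0)) / 2 = x := by split <;> omega
        have e2 : (2 * y + (if 1 ≤ t then 1 else 0)) / 2 = y := by split <;> omega
        have e3 : (2 * x + (if t = 2 then 1 else 0)) % 2 = (if t = 2 then 1 else 0) := by
          split <;> omega
        have e4 : (2 * y + (if 1 ≤ t then 1 else 0)) % 2 = (if 1 ≤ t then 1 else 0) := by
          split <;> omega
        refine ⟨(2 * x + (if t = 2 then 1 else 0), 2 * y + (if 1 ≤ t then 1 else 0)),
          ?_, ?_⟩
        · simp only [Finset.mem_filter, Finset.mem_product, Finset.mem_range]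
          have h2 : (2:ℕ) ^ (n+1) = 2 * 2 ^ n := by rw [pow_succ]; ring
          refine ⟨⟨by split <;> omega, by split <;> omega⟩, ?_⟩
          rw [cond_split, e1, e2, e3, e4]
          exact ⟨hc, by interval_cases t <;> simp⟩
        · simp only [Prod.mk.injEq]
          rw [e1, e2, e3, e4]
          exact ⟨by interval_cases t <;> simp, rfl, rfl⟩
    rw [key, Finset.card_product, Finset.card_range, ih, pow_succ, mul_comm]
end
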